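/- For every integer k ≥ 2, Σ_{m=1}^{k} (-1)^m · ((m-1)!)^2 / (2m)! · R(k,m) = 0, as an identity of rational numbers. -/

import Mathlib

open Finset
open Finset

lemma altpow : ∀ n : ℕ, ∀ d < n, ∑ j ∈ range (n+1), (-1:ℚ)^j * (n.choose j : ℚ) * (j:ℚ)^d = 0 := by
  intro n
  induction n with
  | zero => intro d hd; omega
  | succ n ih =>
    intro d hd
    have hDdef : ∀ e : ℕ, ∑ j ∈ range (n+1), (-1:ℚ)^j * (n.choose j : ℚ) * (j:ℚ)^e
        = ∑ j ∈ range (n+1), (-1:ℚ)^j * (n.choose j : ℚ) * (j:ℚ)^e := fun _ => rfl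
    set D : ℚ := ∑ j ∈ range (n+1), (-1:ℚ)^j * (n.choose j : ℚ) * (j:ℚ)^d with hD
    -- B = 0^d - D
    have hB : ∑ i ∈ range (n+1), (-1:ℚ)^i * (n.choose (i+1) : ℚ) * ((i:ℚ)+1)^d
        = (0:ℚ)^d - D := by
      have h1 : ∑ j ∈ range (n+2), (-1:ℚ)^j * (n.choose j : ℚ) * (j:ℚ)^d = D := by
        rw [Finset.sum_range_succ]
        simp [Nat.choose_succ_self]
        exact hD.symm
      rw [Finset.sum_range_succ'] at h1
      simp only [pow_succ, pow_zero, Nat.choose_zero_right, Nat.cast_one, Nat.cast_zero,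
        Nat.cast_add, Nat.cast_one] at h1
      have h2 : ∑ i ∈ range (n+1), (-1:ℚ)^i * (-1) * (n.choose (i+1) : ℚ) * ((i:ℚ)+1)^d
          = -∑ i ∈ range (n+1), (-1:ℚ)^i * (n.choose (i+1) : ℚ) * ((i:ℚ)+1)^d := by
        rw [← Finset.sum_neg_distrib]; apply Finset.sum_congr rfl; intro i _; ring
      rw [h2] at h1
      linarith [h1]
    -- A = D
    have hA : ∑ i ∈ range (n+1), (-1:ℚ)^i * (n.choose i : ℚ) * ((i:ℚ)+1)^d = D := by
      have expand : ∀ i : ℕ, ((i:ℚ)+1)^d = ∑ e ∈ range (d+1), (i:ℚ)^e * (d.choose e : ℚ) := by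
        intro i
        rw [add_pow]
        apply Finset.sum_congr rfl; intro e _; simp
      calc ∑ i ∈ range (n+1), (-1:ℚ)^i * (n.choose i : ℚ) * ((i:ℚ)+1)^d
          = ∑ i ∈ range (n+1), ∑ e ∈ range (d+1),
              (d.choose e : ℚ) * ((-1:ℚ)^i * (n.choose i : ℚ) * (i:ℚ)^e) := by
            apply Finset.sum_congr rfl; intro i _
            rw [expand i, Finset.mul_sum]
            apply Finset.sum_congr rfl; intro e _; ring
        _ = ∑ e ∈ range (d+1), (d.choose e : ℚ) *
              (∑ i ∈ range (n+1), (-1:ℚ)^i * (n.choose i : ℚ) * (i:ℚ)^e) := by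
            rw [Finset.sum_comm]
            apply Finset.sum_congr rfl; intro e _
            rw [Finset.mul_sum]
        _ = D := by
            rw [Finset.sum_range_succ]
            have : ∀ e ∈ range d, (d.choose e : ℚ) *
                (∑ i ∈ range (n+1), (-1:ℚ)^i * (n.choose i : ℚ) * (i:ℚ)^e) = 0 := by
              intro e he
              rw [ih e (lt_of_lt_of_le (mem_range.mp he) (Nat.lt_succ_iff.mp hd)), mul_zero]
            rw [Finset.sum_eq_zero this]
            simp [hD]
    -- now S
    rw [Finset.sum_range_succ']
    have : ∀ i ∈ range (n+1), (-1:ℚ)^(i+1) * ((n+1).choose (i+1) : ℚ) * (((i:ℕ)+1:ℕ):ℚ)^d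
        = -((-1:ℚ)^i * (n.choose i : ℚ) * ((i:ℚ)+1)^d)
          - ((-1:ℚ)^i * (n.choose (i+1) : ℚ) * ((i:ℚ)+1)^d) := by
      intro i _
      rw [Nat.choose_succ_succ]
      push_cast
      ring
    rw [Finset.sum_congr rfl this, Finset.sum_sub_distrib, Finset.sum_neg_distrib, hA, hB]
    simp only [pow_zero, Nat.choose_zero_right, Nat.cast_one, Nat.cast_zero, one_mul, mul_one]
    ring

lemma negpow_sub {i n : ℕ} (h : i ≤ n) : (-1:ℚ)^(n-i) = (-1)^n * (-1)^i := by
  have h1 : (-1:ℚ)^(n-i) * (-1)^i = (-1)^n := by rw [← pow_add, Nat.sub_add_cancel h]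
  have h2 : (-1:ℚ)^i * (-1)^i = 1 := by
    rw [← pow_add, ← two_mul, pow_mul]; norm_num
  calc (-1:ℚ)^(n-i) = (-1:ℚ)^(n-i) * ((-1)^i * (-1)^i) := by rw [h2, mul_one]
    _ = ((-1:ℚ)^(n-i) * (-1)^i) * (-1)^i := by ring
    _ = (-1)^n * (-1)^i := by rw [h1]

lemma altpow_shift (n d : ℕ) (h : d < n) (c : ℚ) :
    ∑ j ∈ range (n+1), (-1:ℚ)^j * (n.choose j : ℚ) * ((j:ℚ)+c)^d = 0 := by
  calc ∑ j ∈ range (n+1), (-1:ℚ)^j * (n.choose j : ℚ) * ((j:ℚ)+c)^d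
      = ∑ j ∈ range (n+1), ∑ e ∈ range (d+1),
          c^(d-e) * (d.choose e : ℚ) * ((-1:ℚ)^j * (n.choose j : ℚ) * (j:ℚ)^e) := by
        apply Finset.sum_congr rfl; intro j _
        rw [add_pow, Finset.mul_sum]
        apply Finset.sum_congr rfl; intro e _; ring
    _ = ∑ e ∈ range (d+1), c^(d-e) * (d.choose e : ℚ) *
          (∑ j ∈ range (n+1), (-1:ℚ)^j * (n.choose j : ℚ) * (j:ℚ)^e) := by
        rw [Finset.sum_comm]
        apply Finset.sum_congr rfl; intro e _
        rw [Finset.mul_sum]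
    _ = 0 := by
        apply Finset.sum_eq_zero; intro e he
        rw [altpow n e (lt_of_le_of_lt (Nat.lt_succ_iff.mp (mem_range.mp he)) h), mul_zero]

lemma U_zero (k : ℕ) (hk : 2 ≤ k) :
    ∑ j ∈ range k, (-1:ℚ)^j * ((2*k).choose j : ℚ) * ((j:ℚ)-(k:ℚ))^(2*k-2) = 0 := by
  set d := 2*k-2 with hd
  have hdlt : d < 2*k := by omega
  have heven : Even d := ⟨k-1, by omega⟩
  set g : ℕ → ℚ := fun j => (-1:ℚ)^j * ((2*k).choose j : ℚ) * ((j:ℚ)-(k:ℚ))^d with hg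
  have hH : ∑ j ∈ range (2*k+1), g j = 0 := by
    have := altpow_shift (2*k) d hdlt (-(k:ℚ))
    simpa [hg, sub_eq_add_neg] using this
  have hsplit : ∑ j ∈ range (2*k+1), g j
      = ∑ j ∈ range (k+1), g j + ∑ j ∈ Ico (k+1) (2*k+1), g j := by
    rw [Finset.range_eq_Ico, ← Finset.sum_Ico_consecutive g (by omega : 0 ≤ k+1) (by omega : k+1 ≤ 2*k+1), Finset.range_eq_Ico]
  have hrefl : ∑ j ∈ Ico (k+1) (2*k+1), g j = ∑ j ∈ range k, g j := by
    apply Finset.sum_nbij' (fun j => 2*k - j) (fun j => 2*k - j)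
    · intro a ha; simp only [Finset.mem_Ico] at ha; simp only [Finset.mem_range]; omega
    · intro a ha; simp only [Finset.mem_range] at ha; simp only [Finset.mem_Ico]; omega
    · intro a ha; simp only [Finset.mem_Ico] at ha; omega
    · intro a ha; simp only [Finset.mem_range] at ha; omega
    · intro a ha
      simp only [Finset.mem_Ico] at ha
      have h2k : 2*k - a ≤ 2*k := by omega
      have ha2 : a ≤ 2*k := by omega
      simp only [hg]
      rw [negpow_sub ha2, Nat.choose_symm ha2]
      have hc : ((2*k - a : ℕ) : ℚ) = 2*(k:ℚ) - a := by
        push_cast [Nat.cast_sub ha2]; ring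
      rw [hc]
      have : (2*(k:ℚ) - a - k) = -((a:ℚ) - k) := by ring
      rw [this, heven.neg_pow]
      have : ((-1:ℚ)^(2*k)) = 1 := by rw [pow_mul]; norm_num
      rw [this, one_mul]
  have hmid : g k = 0 := by
    simp only [hg]
    have : ((k:ℚ) - (k:ℚ)) = 0 := by ring
    rw [this, zero_pow (by omega : d ≠ 0), mul_zero]
  have hsp2 : ∑ j ∈ range (k+1), g j = ∑ j ∈ range k, g j + g k := Finset.sum_range_succ g k
  have : 2 * ∑ j ∈ range k, g j = 0 := by
    rw [hsplit, hsp2, hmid, hrefl] at hH; linarith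
  have := mul_eq_zero.mp this
  simpa [hg] using this.resolve_left (by norm_num)

noncomputable def aq (i m : ℕ) : ℚ :=
  if i ≤ m then ((m.factorial : ℚ))^2 / (((m-i).factorial : ℚ) * ((m+i).factorial : ℚ)) else 0

lemma key {m i : ℕ} (hi : 1 ≤ i) (him : i ≤ m) :
    ((m-1).factorial : ℚ)^2 / ((2*m).factorial : ℚ) * (((2*m).choose (m-i)) : ℚ)
      = (aq i m - aq i (m-1)) / (i:ℚ)^2 := by
  have hm1 : 1 ≤ m := le_trans hi him
  have hfacm : (m.factorial : ℚ) = (m:ℚ) * ((m-1).factorial : ℚ) := by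
    have h : m.factorial = m * (m-1).factorial := by
      conv_lhs => rw [show m = (m-1)+1 by omega]
      rw [Nat.factorial_succ]
      congr 1 <;> omega
    rw [h]; push_cast; ring
  have hchoose : (((2*m).choose (m-i)) : ℚ) * ((m-i).factorial : ℚ) * ((m+i).factorial : ℚ)
      = ((2*m).factorial : ℚ) := by
    have h := Nat.choose_mul_factorial_mul_factorial (show m-i ≤ 2*m by omega)
    rw [show 2*m - (m-i) = m+i by omega] at h
    exact_mod_cast congrArg (Nat.cast : ℕ → ℚ) h
  have hF1 : ((m-1).factorial : ℚ) ≠ 0 := Nat.cast_ne_zero.mpr (Nat.factorial_ne_zero _)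
  have hF2 : ((2*m).factorial : ℚ) ≠ 0 := Nat.cast_ne_zero.mpr (Nat.factorial_ne_zero _)
  have hiQ : (i:ℚ) ≠ 0 := Nat.cast_ne_zero.mpr (by omega)
  rcases eq_or_lt_of_le him with heq | hlt
  · subst heq
    rw [aq, aq, if_pos le_rfl, if_neg (by omega)]
    rw [show i - i = 0 by omega, Nat.choose_zero_right, Nat.factorial_zero,
      show i + i = 2*i by ring]
    rw [hfacm]
    field_simp
    ring
  · -- i < m
    have h1 : ((m-i).factorial : ℚ) = ((m:ℚ)-(i:ℚ)) * ((m-1-i).factorial : ℚ) := by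
      have h : (m-i).factorial = (m-i) * (m-1-i).factorial := by
        conv_lhs => rw [show m-i = (m-1-i)+1 by omega]
        rw [Nat.factorial_succ]
        congr 1 <;> omega
      rw [h]; push_cast [Nat.cast_sub him]; ring
    have h2 : ((m+i).factorial : ℚ) = ((m:ℚ)+(i:ℚ)) * ((m-1+i).factorial : ℚ) := by
      have h : (m+i).factorial = (m+i) * (m-1+i).factorial := by
        conv_lhs => rw [show m+i = (m-1+i)+1 by omega]
        rw [Nat.factorial_succ]
        congr 1 <;> omega
      rw [h]; push_cast; ring
    have ha : ((m-1-i).factorial : ℚ) ≠ 0 := Nat.cast_ne_zero.mpr (Nat.factorial_ne_zero _)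
    have hb : ((m-1+i).factorial : ℚ) ≠ 0 := Nat.cast_ne_zero.mpr (Nat.factorial_ne_zero _)
    have hmi : ((m:ℚ)-(i:ℚ)) ≠ 0 := by
      have : (i:ℚ) < (m:ℚ) := by exact_mod_cast hlt
      linarith
    have hpi : ((m:ℚ)+(i:ℚ)) ≠ 0 := by positivity
    have hc : (((2*m).choose (m-i)) : ℚ)
        = ((2*m).factorial : ℚ) / (((m:ℚ)-(i:ℚ)) * ((m-1-i).factorial : ℚ)
            * (((m:ℚ)+(i:ℚ)) * ((m-1+i).factorial : ℚ))) := by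
      rw [eq_div_iff (by positivity)]
      rw [← h1, ← h2]
      linarith [hchoose]
    rw [aq, aq, if_pos him, if_pos (by omega : i ≤ m-1)]
    rw [h1, h2, hfacm, hc, show m-1+i = m-1+i from rfl]
    field_simp
    ring

lemma tele {i k : ℕ} (hi : 1 ≤ i) (hik : i ≤ k) :
    ∑ m ∈ Icc i k, (((m-1).factorial : ℚ)^2 / ((2*m).factorial : ℚ) * (((2*m).choose (m-i)) : ℚ))
      = aq i k / (i:ℚ)^2 := by
  have hstep : ∀ m ∈ Icc i k,
      ((m-1).factorial : ℚ)^2 / ((2*m).factorial : ℚ) * (((2*m).choose (m-i)) : ℚ)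
        = (aq i m - aq i (m-1)) / (i:ℚ)^2 := by
    intro m hm
    simp only [mem_Icc] at hm
    exact key hi hm.1
  rw [Finset.sum_congr rfl hstep, ← Finset.sum_div]
  congr 1
  have hIcc : Icc i k = Ico i (k+1) := by rw [Finset.Ico_add_one_right_eq_Icc]
  rw [hIcc, Finset.sum_Ico_eq_sum_range]
  set F : ℕ → ℚ := fun t => aq i (i+t-1) with hF
  have hterm : ∀ t ∈ range (k+1-i), aq i (i+t) - aq i (i+t-1) = F (t+1) - F t := by
    intro t _
    simp only [hF]
    congr 2
  rw [Finset.sum_congr rfl hterm, Finset.sum_range_sub F]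
  have hF0 : F 0 = 0 := by
    simp only [hF]
    rw [aq, if_neg (by omega)]
  have hFtop : F (k+1-i) = aq i k := by
    simp only [hF]
    congr 1
    omega
  rw [hF0, hFtop, sub_zero]

/-- `R k m = ∑_{j=0}^m (-1)^j C(2m, j) (m-j)^{2k}`, the sequence A304330. -/
def R (k m : ℕ) : ℤ :=
  ∑ j ∈ Finset.range (m + 1),
    (-1 : ℤ) ^ j * ((2 * m).choose j : ℤ) * (((m - j) ^ (2 * k) : ℕ) : ℤ)

theorem stmt_15 (k : ℕ) (hk : 2 ≤ k) :
    ∑ m ∈ Finset.Icc 1 k,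
        (-1 : ℚ) ^ m * ((Nat.factorial (m - 1) : ℚ) ^ 2 / (Nat.factorial (2 * m) : ℚ)) *
          (R k m : ℚ) = 0 := by
  set t : ℕ → ℕ → ℚ := fun m i => (-1:ℚ)^i * (i:ℚ)^(2*k) *
    (((m-1).factorial : ℚ)^2 / ((2*m).factorial : ℚ) * (((2*m).choose (m-i)) : ℚ)) with ht
  have stepA : ∀ m ∈ Icc 1 k,
      (-1:ℚ)^m * (((m-1).factorial : ℚ)^2 / ((2*m).factorial : ℚ)) * ((R k m : ℤ):ℚ)
        = ∑ i ∈ range (m+1), t m i := by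
    intro m hm
    simp only [mem_Icc] at hm
    have hR : ((R k m : ℤ):ℚ)
        = ∑ j ∈ range (m+1), (-1:ℚ)^j * (((2*m).choose j : ℕ):ℚ) * (((m-j : ℕ)):ℚ)^(2*k) := by
      rw [R]; push_cast; ring
    set f : ℕ → ℚ := fun j => (-1:ℚ)^j * (((2*m).choose j : ℕ):ℚ) * (((m-j : ℕ)):ℚ)^(2*k)
      with hf
    have hrefl : ∑ j ∈ range (m+1), f j = ∑ i ∈ range (m+1), f (m - i) := by
      have h := Finset.sum_range_reflect f (m+1)
      simp only [Nat.add_sub_cancel] at h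
      exact h.symm
    rw [hR, hrefl, Finset.mul_sum]
    apply Finset.sum_congr rfl
    intro i hi
    have him : i ≤ m := Nat.lt_succ_iff.mp (mem_range.mp hi)
    simp only [hf, ht]
    rw [show m - (m - i) = i by omega]
    rw [negpow_sub him]
    have hsq : (-1:ℚ)^m * (-1:ℚ)^m = 1 := by
      rw [← pow_add, ← two_mul, pow_mul]; norm_num
    push_cast
    calc (-1:ℚ)^m * (((m-1).factorial : ℚ)^2 / ((2*m).factorial : ℚ)) *
          ((-1:ℚ)^m * (-1:ℚ)^i * (((2*m).choose (m-i) : ℕ):ℚ) * ((i:ℚ))^(2*k))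
        = ((-1:ℚ)^m * (-1:ℚ)^m) * ((-1:ℚ)^i * (i:ℚ)^(2*k) *
            (((m-1).factorial : ℚ)^2 / ((2*m).factorial : ℚ) * (((2*m).choose (m-i) : ℕ):ℚ))) := by
          ring
      _ = _ := by rw [hsq, one_mul]
  have stepB : ∀ m ∈ Icc 1 k,
      ∑ i ∈ range (m+1), t m i = ∑ i ∈ Icc 1 k, (if i ≤ m then t m i else 0) := by
    intro m hm
    simp only [mem_Icc] at hm
    have hfil : (Icc 1 k).filter (fun i => i ≤ m) = Icc 1 m := by
      ext x
      simp only [mem_filter, mem_Icc]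
      omega
    rw [← Finset.sum_filter, hfil]
    rw [Finset.range_eq_Ico, Finset.sum_eq_sum_Ico_succ_bot (by omega : 0 < m+1)]
    have ht0 : t m 0 = 0 := by
      simp only [ht]
      rw [Nat.cast_zero, zero_pow (by omega : 2*k ≠ 0)]
      ring
    rw [ht0, zero_add, Finset.Ico_add_one_right_eq_Icc]
  have stepC : ∀ i ∈ Icc 1 k,
      ∑ m ∈ Icc 1 k, (if i ≤ m then t m i else 0)
        = (-1:ℚ)^i * (i:ℚ)^(2*k) * (aq i k / (i:ℚ)^2) := by
    intro i hi
    simp only [mem_Icc] at hi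
    have hfil : (Icc 1 k).filter (fun m => i ≤ m) = Icc i k := by
      ext x
      simp only [mem_filter, mem_Icc]
      omega
    rw [← Finset.sum_filter, hfil]
    have : ∀ m ∈ Icc i k, t m i = ((-1:ℚ)^i * (i:ℚ)^(2*k)) *
        (((m-1).factorial : ℚ)^2 / ((2*m).factorial : ℚ) * (((2*m).choose (m-i)) : ℚ)) := by
      intro m _; simp only [ht]
    rw [Finset.sum_congr rfl this, ← Finset.mul_sum, tele hi.1 hi.2]
  set g : ℕ → ℚ := fun j => (-1:ℚ)^j * ((2*k).choose j : ℚ) * ((j:ℚ)-(k:ℚ))^(2*k-2) with hg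
  set c : ℚ := (-1:ℚ)^k * ((k.factorial : ℚ)^2 / ((2*k).factorial : ℚ)) with hc
  have stepD : ∀ i ∈ Icc 1 k,
      (-1:ℚ)^i * (i:ℚ)^(2*k) * (aq i k / (i:ℚ)^2) = c * g (k - i) := by
    intro i hi
    simp only [mem_Icc] at hi
    have hik : i ≤ k := hi.2
    have hchoose : (((2*k).choose (k-i)) : ℚ) * ((k-i).factorial : ℚ) * ((k+i).factorial : ℚ)
        = ((2*k).factorial : ℚ) := by
      have h := Nat.choose_mul_factorial_mul_factorial (show k-i ≤ 2*k by omega)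
      rw [show 2*k - (k-i) = k+i by omega] at h
      exact_mod_cast congrArg (Nat.cast : ℕ → ℚ) h
    have hA : ((k-i).factorial : ℚ) ≠ 0 := Nat.cast_ne_zero.mpr (Nat.factorial_ne_zero _)
    have hB : ((k+i).factorial : ℚ) ≠ 0 := Nat.cast_ne_zero.mpr (Nat.factorial_ne_zero _)
    have hF2 : ((2*k).factorial : ℚ) ≠ 0 := Nat.cast_ne_zero.mpr (Nat.factorial_ne_zero _)
    have hiQ : (i:ℚ) ≠ 0 := Nat.cast_ne_zero.mpr (by omega)
    have hCval : (((2*k).choose (k-i)) : ℚ)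
        = ((2*k).factorial : ℚ) / (((k-i).factorial : ℚ) * ((k+i).factorial : ℚ)) := by
      rw [eq_div_iff (by positivity)]
      linarith [hchoose]
    simp only [hg, hc]
    rw [aq, if_pos hik]
    have hcast : ((k - i : ℕ):ℚ) = (k:ℚ) - (i:ℚ) := by
      push_cast [Nat.cast_sub hik]; ring
    rw [hcast]
    have heven : Even (2*k-2) := ⟨k-1, by omega⟩
    have hpow' : ((k:ℚ) - (i:ℚ) - (k:ℚ))^(2*k-2) = ((i:ℚ))^(2*k-2) := by
      rw [show (k:ℚ) - (i:ℚ) - (k:ℚ) = -(i:ℚ) by ring, heven.neg_pow]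
    rw [hpow', negpow_sub hik, hCval]
    have hsq : (-1:ℚ)^k * (-1:ℚ)^k = 1 := by
      rw [← pow_add, ← two_mul, pow_mul]; norm_num
    have hipow : (i:ℚ)^(2*k) = (i:ℚ)^(2*k-2) * (i:ℚ)^2 := by
      rw [← pow_add]
      congr 1
      omega
    rw [hipow]
    have h2k : (-1:ℚ)^(k*2) = 1 := by
      rw [mul_comm k 2, pow_mul]; norm_num
    field_simp
    linear_combination (-((k.factorial:ℚ)^2 * (-1:ℚ)^i * ((2*k).factorial:ℚ) * (i:ℚ)^(2*k-2) *
      (((k-i).factorial:ℚ) * ((k+i).factorial:ℚ) * (i:ℚ)^2))) * hsq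
      + ((k.factorial:ℚ)^2 * ((2*k).factorial:ℚ) * (i:ℚ)^2 * (i:ℚ)^(2*k-2) *
        ((k-i).factorial:ℚ) * ((k+i).factorial:ℚ) * (-1:ℚ)^i - 1) * h2k
  have hreindex : ∑ i ∈ Icc 1 k, g (k - i) = ∑ j ∈ range k, g j := by
    apply Finset.sum_nbij' (fun i => k - i) (fun j => k - j)
    · intro a ha; simp only [mem_Icc] at ha; simp only [mem_range]; omega
    · intro a ha; simp only [mem_range] at ha; simp only [mem_Icc]; omega
    · intro a ha; simp only [mem_Icc] at ha; omega
    · intro a ha; simp only [mem_range] at ha; omega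
    · intro a _; rfl
  calc ∑ m ∈ Icc 1 k, (-1:ℚ)^m * (((m-1).factorial : ℚ)^2 / ((2*m).factorial : ℚ)) * ((R k m : ℤ):ℚ)
      = ∑ m ∈ Icc 1 k, ∑ i ∈ Icc 1 k, (if i ≤ m then t m i else 0) := by
        apply Finset.sum_congr rfl
        intro m hm
        rw [stepA m hm, stepB m hm]
    _ = ∑ i ∈ Icc 1 k, ∑ m ∈ Icc 1 k, (if i ≤ m then t m i else 0) := Finset.sum_comm
    _ = ∑ i ∈ Icc 1 k, c * g (k - i) := by
        apply Finset.sum_congr rfl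
        intro i hi
        rw [stepC i hi, stepD i hi]
    _ = c * ∑ j ∈ range k, g j := by rw [← Finset.mul_sum, hreindex]
    _ = 0 := by rw [hg]; rw [U_zero k hk]; ring
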